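/- For every a > 0, the function x ↦ Φ(−a·√x) is convex on [0, ∞), where Φ is the cumulative distribution function of the standard normal distribution. -/

import Mathlib

open MeasureTheory ProbabilityTheory Real

/-- CDF of the standard normal distribution. -/
noncomputable def stdNormalCDF (x : ℝ) : ℝ :=
  ((gaussianReal 0 1) (Set.Iic x)).toReal

lemma stdNormalCDF_eq_integral (x : ℝ) :
    stdNormalCDF x = ∫ t in Set.Iic x, gaussianPDFReal 0 1 t := by
  rw [stdNormalCDF, gaussianReal_apply_eq_integral 0 one_ne_zero,
    ENNReal.toReal_ofReal (integral_nonneg fun t => gaussianPDFReal_nonneg _ _ _)]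

lemma continuous_gaussianPDFReal01 : Continuous (gaussianPDFReal 0 1) := by
  rw [gaussianPDFReal_def]
  fun_prop

lemma hasDerivAt_stdNormalCDF (x : ℝ) :
    HasDerivAt stdNormalCDF (gaussianPDFReal 0 1 x) x := by
  have hint : Integrable (gaussianPDFReal 0 1) := integrable_gaussianPDFReal 0 1
  have h : ∀ y, stdNormalCDF y
      = stdNormalCDF 0 + ∫ t in (0:ℝ)..y, gaussianPDFReal 0 1 t := by
    intro y
    rw [stdNormalCDF_eq_integral, stdNormalCDF_eq_integral,
      ← intervalIntegral.integral_Iic_sub_Iic hint.integrableOn hint.integrableOn]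
    ring
  have : HasDerivAt (fun y => stdNormalCDF 0 + ∫ t in (0:ℝ)..y, gaussianPDFReal 0 1 t)
      (gaussianPDFReal 0 1 x) x :=
    ((continuous_gaussianPDFReal01.integral_hasStrictDerivAt 0 x).hasDerivAt).const_add _
  exact (funext h) ▸ this

lemma monotone_stdNormalCDF : Monotone stdNormalCDF := fun x y hxy =>
  ENNReal.toReal_mono (measure_ne_top _ _) (measure_mono (Set.Iic_subset_Iic.2 hxy))

lemma concaveOn_stdNormalCDF : ConcaveOn ℝ (Set.Ici (0:ℝ)) stdNormalCDF := by
  have hderiv : deriv stdNormalCDF = gaussianPDFReal 0 1 :=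
    funext fun x => (hasDerivAt_stdNormalCDF x).deriv
  apply AntitoneOn.concaveOn_of_deriv (convex_Ici 0)
  · exact fun x _ => (hasDerivAt_stdNormalCDF x).continuousAt.continuousWithinAt
  · exact fun x _ => (hasDerivAt_stdNormalCDF x).differentiableAt.differentiableWithinAt
  · rw [hderiv, interior_Ici]
    intro x hx y hy hxy
    simp only [gaussianPDFReal, NNReal.coe_one, mul_one, sub_zero]
    have hexp : rexp (-y ^ 2 / 2) ≤ rexp (-x ^ 2 / 2) :=
      Real.exp_le_exp.2 (by nlinarith [le_of_lt (Set.mem_Ioi.mp hx), le_of_lt (Set.mem_Ioi.mp hy)])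
    exact mul_le_mul_of_nonneg_left hexp (by positivity)

lemma stdNormalCDF_neg (t : ℝ) : stdNormalCDF (-t) = 1 - stdNormalCDF t := by
  have hmap : (gaussianReal 0 1).map (fun x => (-1 : ℝ) * x) = gaussianReal 0 1 := by
    rw [gaussianReal_map_const_mul (-1)]
    norm_num
  have hsingle : (gaussianReal 0 1) {t} = 0 := by
    rw [gaussianReal_apply_eq_integral 0 one_ne_zero,
      Measure.restrict_eq_zero.mpr (measure_singleton t), integral_zero_measure,
      ENNReal.ofReal_zero]
  have hIio : (gaussianReal 0 1) (Set.Iio t) = (gaussianReal 0 1) (Set.Iic t) := by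
    refine le_antisymm (measure_mono Set.Iio_subset_Iic_self) ?_
    calc (gaussianReal 0 1) (Set.Iic t) = (gaussianReal 0 1) (Set.Iio t ∪ {t}) := by
          rw [Set.Iio_union_right]
      _ ≤ (gaussianReal 0 1) (Set.Iio t) + (gaussianReal 0 1) {t} := measure_union_le _ _
      _ = (gaussianReal 0 1) (Set.Iio t) := by rw [hsingle, add_zero]
  have h1 : (gaussianReal 0 1) (Set.Iic (-t)) = (gaussianReal 0 1) (Set.Ici t) := by
    conv_lhs => rw [← hmap]
    rw [Measure.map_apply (by fun_prop) measurableSet_Iic]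
    congr 1
    ext x
    simp [neg_le]
  have h2 : (gaussianReal 0 1) (Set.Ici t) = 1 - (gaussianReal 0 1) (Set.Iic t) := by
    rw [← Set.compl_Iio, prob_compl_eq_one_sub measurableSet_Iio, hIio]
  rw [stdNormalCDF, stdNormalCDF, h1, h2,
    ENNReal.toReal_sub_of_le prob_le_one ENNReal.one_ne_top, ENNReal.toReal_one]

/-- For every `a > 0`, the function `x ↦ Φ(−a√x)` is convex on `[0, ∞)`. -/
theorem convexOn_stdNormalCDF_neg_sqrt (a : ℝ) (ha : 0 < a) :
    ConvexOn ℝ (Set.Ici (0 : ℝ)) (fun x => stdNormalCDF (-(a * Real.sqrt x))) := by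
  have himg : (fun x => a * Real.sqrt x) '' Set.Ici (0:ℝ) = Set.Ici (0:ℝ) := by
    ext y
    constructor
    · rintro ⟨x, hx, rfl⟩
      exact mul_nonneg ha.le (Real.sqrt_nonneg x)
    · intro hy
      refine ⟨(y / a) ^ 2, Set.mem_Ici.mpr (sq_nonneg _), ?_⟩
      show a * Real.sqrt ((y / a) ^ 2) = y
      rw [Real.sqrt_sq (div_nonneg hy ha.le)]
      field_simp
  have hf : ConcaveOn ℝ (Set.Ici (0:ℝ)) (fun x => a * Real.sqrt x) := by
    have := (Real.strictConcaveOn_sqrt.concaveOn).smul ha.le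
    simpa [smul_eq_mul] using this
  have hcomp : ConcaveOn ℝ (Set.Ici (0:ℝ)) (stdNormalCDF ∘ fun x => a * Real.sqrt x) := by
    apply ConcaveOn.comp
    · rw [himg]; exact concaveOn_stdNormalCDF
    · exact hf
    · rw [himg]; exact monotone_stdNormalCDF.monotoneOn _
  have heq : (fun x => stdNormalCDF (-(a * Real.sqrt x)))
      = fun x => 1 - stdNormalCDF (a * Real.sqrt x) := funext fun x => stdNormalCDF_neg _
  rw [heq]
  have := hcomp.neg.add_const 1
  exact this.congr fun x _ => by simp [Function.comp, sub_eq_neg_add]
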